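/- Full fixed-point convergence theorem: Let (ρ_t^k), (ρ_z^k) be nondecreasing positive sequences with ∑√(k/ρ_t^k) < ∞, ∑√(k/ρ_z^k) < ∞, and ρ_z^k/ρ_t^k → c > 0. Let D^ext, D^int be bounded denoisers with σ_k = √(α/ρ_t^k), γ_k = √(β/ρ_z^k), let L₁, L₂ have full column rank, and define iterates t_{k+1} = D^ext_{σ_k}(L₁u_k), z_{k+1} = D^int_{γ_k}(L₂u_k), u_{k+1} = argmin_u { (1/2)‖Au−v‖² + (ρ_t^k/2)‖L₁u − t_{k+1}‖² + (ρ_z^k/2)‖L₂u − z_{k+1}‖² }. Then there exist t*, z*, u* such that t_k → t*, z_k → z*, u_k → u*, L₁u_k → t*, and L₂u_k → z*. -/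

import Mathlib

open Matrix Filter Topology

private lemma aux_summable_of_shift (f g : ℕ → ℝ) (m : ℕ) (h0 : ∀ n, 0 ≤ f n)
    (hle : ∀ n, f (n + m) ≤ g n) (hg : Summable g) : Summable f :=
  (summable_nat_add_iff m).1 (Summable.of_nonneg_of_le (fun n => h0 _) hle hg)

private lemma aux_ker_bot {l n : ℕ} (L : Matrix (Fin l) (Fin n) ℝ)
    (hL : (Lᵀ * L).PosDef) :
    LinearMap.ker (toEuclideanLin L : EuclideanSpace ℝ (Fin n) →ₗ[ℝ] EuclideanSpace ℝ (Fin l)) = ⊥ := by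
  rw [LinearMap.ker_eq_bot']
  intro x hx
  by_contra hx0
  have hy0 : (WithLp.equiv 2 (Fin n → ℝ)) x ≠ 0 := by
    intro h
    exact hx0 ((WithLp.equiv 2 (Fin n → ℝ)).injective (by simpa using h))
  have hmv : L *ᵥ (WithLp.equiv 2 (Fin n → ℝ)) x = 0 := by
    have := congrArg (WithLp.equiv 2 (Fin l → ℝ)) hx
    simpa using this
  have h2 := hL.dotProduct_mulVec_pos hy0
  rw [← Matrix.mulVec_mulVec, hmv, Matrix.mulVec_zero, dotProduct_zero] at h2
  exact lt_irrefl 0 h2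

set_option maxHeartbeats 1600000 in
/-- Fixed-point convergence theorem for the hybrid Plug-and-Play HQS algorithm:
under bounded denoisers, full-column-rank operators `L₁, L₂` and suitable penalty
sequences, the iterates `t_k, z_k, u_k` converge, and moreover `L₁u_k → t*`,
`L₂u_k → z*`. -/
theorem stmt_16 {n l₁ l₂ : ℕ}
    (A : Matrix (Fin n) (Fin n) ℝ)
    (L₁ : Matrix (Fin l₁) (Fin n) ℝ) (L₂ : Matrix (Fin l₂) (Fin n) ℝ)
    (hL₁ : (L₁ᵀ * L₁).PosDef) (hL₂ : (L₂ᵀ * L₂).PosDef)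
    (v : EuclideanSpace ℝ (Fin n))
    (ρt ρz : ℕ → ℝ) (hρtpos : ∀ k, 0 < ρt k) (hρzpos : ∀ k, 0 < ρz k)
    (hρtmono : Monotone ρt) (hρzmono : Monotone ρz)
    (hsum_t : Summable (fun k : ℕ => Real.sqrt ((k : ℝ) / ρt k)))
    (hsum_z : Summable (fun k : ℕ => Real.sqrt ((k : ℝ) / ρz k)))
    (c : ℝ) (hc : 0 < c)
    (hratio : Tendsto (fun k => ρz k / ρt k) atTop (𝓝 c))
    (α β : ℝ) (hα : 0 < α) (hβ : 0 < β)
    (Dext : ℝ → EuclideanSpace ℝ (Fin l₁) → EuclideanSpace ℝ (Fin l₁))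
    (Dint : ℝ → EuclideanSpace ℝ (Fin l₂) → EuclideanSpace ℝ (Fin l₂))
    (Cext Cint : ℝ) (hCext : 0 ≤ Cext) (hCint : 0 ≤ Cint)
    (hDext : ∀ ε : ℝ, 0 < ε → ∀ x, ‖Dext ε x - x‖ ^ 2 ≤ ε ^ 2 * Cext)
    (hDint : ∀ ε : ℝ, 0 < ε → ∀ x, ‖Dint ε x - x‖ ^ 2 ≤ ε ^ 2 * Cint)
    (u : ℕ → EuclideanSpace ℝ (Fin n))
    (t : ℕ → EuclideanSpace ℝ (Fin l₁)) (z : ℕ → EuclideanSpace ℝ (Fin l₂))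
    (ht : ∀ k, t (k + 1) = Dext (Real.sqrt (α / ρt k)) (toEuclideanLin L₁ (u k)))
    (hz : ∀ k, z (k + 1) = Dint (Real.sqrt (β / ρz k)) (toEuclideanLin L₂ (u k)))
    (hu : ∀ k, ∀ w : EuclideanSpace ℝ (Fin n),
      (1 / 2) * ‖toEuclideanLin A (u (k + 1)) - v‖ ^ 2
          + (ρt k / 2) * ‖toEuclideanLin L₁ (u (k + 1)) - t (k + 1)‖ ^ 2
          + (ρz k / 2) * ‖toEuclideanLin L₂ (u (k + 1)) - z (k + 1)‖ ^ 2 ≤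
        (1 / 2) * ‖toEuclideanLin A w - v‖ ^ 2
          + (ρt k / 2) * ‖toEuclideanLin L₁ w - t (k + 1)‖ ^ 2
          + (ρz k / 2) * ‖toEuclideanLin L₂ w - z (k + 1)‖ ^ 2) :
    ∃ (tstar : EuclideanSpace ℝ (Fin l₁)) (zstar : EuclideanSpace ℝ (Fin l₂))
      (ustar : EuclideanSpace ℝ (Fin n)),
      Tendsto t atTop (𝓝 tstar) ∧ Tendsto z atTop (𝓝 zstar) ∧
        Tendsto u atTop (𝓝 ustar) ∧
        Tendsto (fun k => toEuclideanLin L₁ (u k)) atTop (𝓝 tstar) ∧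
        Tendsto (fun k => toEuclideanLin L₂ (u k)) atTop (𝓝 zstar) := by
  classical
  set M : ℝ := α * Cext + β * Cint with hMdef
  have hM0 : 0 ≤ M := by positivity
  set B0 : ℝ := ‖toEuclideanLin A (u 0) - v‖ ^ 2 with hB0def
  have hB00 : 0 ≤ B0 := sq_nonneg _
  -- denoiser perturbation bounds
  have hA1 : ∀ k, ρt k * ‖t (k + 1) - toEuclideanLin L₁ (u k)‖ ^ 2 ≤ α * Cext := by
    intro k
    have hdiv : 0 < α / ρt k := div_pos hα (hρtpos k)
    have h1 := hDext _ (Real.sqrt_pos.2 hdiv) (toEuclideanLin L₁ (u k))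
    rw [← ht k, Real.sq_sqrt hdiv.le] at h1
    calc ρt k * ‖t (k + 1) - toEuclideanLin L₁ (u k)‖ ^ 2
        ≤ ρt k * (α / ρt k * Cext) :=
          mul_le_mul_of_nonneg_left h1 (hρtpos k).le
      _ = α * Cext := by field_simp [(hρtpos k).ne']
  have hB1 : ∀ k, ρz k * ‖z (k + 1) - toEuclideanLin L₂ (u k)‖ ^ 2 ≤ β * Cint := by
    intro k
    have hdiv : 0 < β / ρz k := div_pos hβ (hρzpos k)
    have h1 := hDint _ (Real.sqrt_pos.2 hdiv) (toEuclideanLin L₂ (u k))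
    rw [← hz k, Real.sq_sqrt hdiv.le] at h1
    calc ρz k * ‖z (k + 1) - toEuclideanLin L₂ (u k)‖ ^ 2
        ≤ ρz k * (β / ρz k * Cint) :=
          mul_le_mul_of_nonneg_left h1 (hρzpos k).le
      _ = β * Cint := by field_simp [(hρzpos k).ne']
  -- the key inequality from the minimization step with `w = u k`
  have key : ∀ k, ‖toEuclideanLin A (u (k + 1)) - v‖ ^ 2
      + ρt k * ‖toEuclideanLin L₁ (u (k + 1)) - t (k + 1)‖ ^ 2
      + ρz k * ‖toEuclideanLin L₂ (u (k + 1)) - z (k + 1)‖ ^ 2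
      ≤ ‖toEuclideanLin A (u k) - v‖ ^ 2 + M := by
    intro k
    have h := hu k (u k)
    rw [norm_sub_rev (toEuclideanLin L₁ (u k)), norm_sub_rev (toEuclideanLin L₂ (u k))] at h
    have h1 := hA1 k
    have h2 := hB1 k
    rw [hMdef]
    linarith
  -- growth bound on the data-fidelity term
  have Gbound : ∀ k : ℕ, ‖toEuclideanLin A (u k) - v‖ ^ 2 ≤ B0 + k * M := by
    intro k
    induction k with
    | zero => simp [hB0def]
    | succ k ih =>
      have h := key k
      have ht0 : 0 ≤ ρt k * ‖toEuclideanLin L₁ (u (k + 1)) - t (k + 1)‖ ^ 2 :=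
        mul_nonneg (hρtpos k).le (sq_nonneg _)
      have hz0 : 0 ≤ ρz k * ‖toEuclideanLin L₂ (u (k + 1)) - z (k + 1)‖ ^ 2 :=
        mul_nonneg (hρzpos k).le (sq_nonneg _)
      push_cast
      linarith
  -- bounds on the residuals
  have Ebound : ∀ k : ℕ, ρt k * ‖toEuclideanLin L₁ (u (k + 1)) - t (k + 1)‖ ^ 2
      ≤ B0 + ((k : ℝ) + 1) * M := by
    intro k
    have h := key k
    have hg1 : 0 ≤ ‖toEuclideanLin A (u (k + 1)) - v‖ ^ 2 := sq_nonneg _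
    have hz0 : 0 ≤ ρz k * ‖toEuclideanLin L₂ (u (k + 1)) - z (k + 1)‖ ^ 2 :=
      mul_nonneg (hρzpos k).le (sq_nonneg _)
    have hG := Gbound k
    nlinarith
  have Fbound : ∀ k : ℕ, ρz k * ‖toEuclideanLin L₂ (u (k + 1)) - z (k + 1)‖ ^ 2
      ≤ B0 + ((k : ℝ) + 1) * M := by
    intro k
    have h := key k
    have hg1 : 0 ≤ ‖toEuclideanLin A (u (k + 1)) - v‖ ^ 2 := sq_nonneg _
    have ht0 : 0 ≤ ρt k * ‖toEuclideanLin L₁ (u (k + 1)) - t (k + 1)‖ ^ 2 :=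
      mul_nonneg (hρtpos k).le (sq_nonneg _)
    have hG := Gbound k
    nlinarith
  set CE : ℝ := Real.sqrt (B0 + 2 * M) with hCEdef
  -- for k ≥ 1, the residuals are dominated by `CE * √(k / ρ k)`
  have sq_le_aux : ∀ (ρ : ℕ → ℝ), (∀ k, 0 < ρ k) → ∀ (x : ℝ) (k : ℕ), 1 ≤ k →
      ρ k * x ^ 2 ≤ B0 + ((k : ℝ) + 1) * M → x ≤ CE * Real.sqrt ((k : ℝ) / ρ k) := by
    intro ρ hρ x k hk hx
    have hk1 : (1 : ℝ) ≤ (k : ℝ) := by exact_mod_cast hk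
    have h1 : x ^ 2 ≤ (B0 + ((k : ℝ) + 1) * M) / ρ k :=
      (le_div_iff₀ (hρ k)).2 (by rw [mul_comm]; exact hx)
    have hρk := hρ k
    have h2 : (B0 + ((k : ℝ) + 1) * M) / ρ k ≤ (B0 + 2 * M) * ((k : ℝ) / ρ k) := by
      rw [mul_div_assoc']
      gcongr
      nlinarith [mul_nonneg (sub_nonneg.2 hk1) hB00, mul_nonneg (sub_nonneg.2 hk1) hM0]
    have hx2 : x ^ 2 ≤ (B0 + 2 * M) * ((k : ℝ) / ρ k) := h1.trans h2
    have := Real.sqrt_le_sqrt hx2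
    rw [Real.sqrt_mul (by positivity) ((k : ℝ) / ρ k)] at this
    calc x ≤ |x| := le_abs_self x
      _ = Real.sqrt (x ^ 2) := (Real.sqrt_sq_eq_abs x).symm
      _ ≤ CE * Real.sqrt ((k : ℝ) / ρ k) := this
  have e_le : ∀ k : ℕ, 1 ≤ k →
      ‖toEuclideanLin L₁ (u (k + 1)) - t (k + 1)‖ ≤ CE * Real.sqrt ((k : ℝ) / ρt k) :=
    fun k hk => sq_le_aux ρt hρtpos _ k hk (Ebound k)
  have f_le : ∀ k : ℕ, 1 ≤ k →
      ‖toEuclideanLin L₂ (u (k + 1)) - z (k + 1)‖ ≤ CE * Real.sqrt ((k : ℝ) / ρz k) :=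
    fun k hk => sq_le_aux ρz hρzpos _ k hk (Fbound k)
  set CA : ℝ := Real.sqrt (α * Cext) with hCAdef
  set CB : ℝ := Real.sqrt (β * Cint) with hCBdef
  have sq_le_aux2 : ∀ (ρ : ℕ → ℝ), (∀ k, 0 < ρ k) → ∀ (C : ℝ), 0 ≤ C → ∀ (x : ℝ) (k : ℕ), 1 ≤ k →
      ρ k * x ^ 2 ≤ C → x ≤ Real.sqrt C * Real.sqrt ((k : ℝ) / ρ k) := by
    intro ρ hρ C hC x k hk hx
    have hk1 : (1 : ℝ) ≤ (k : ℝ) := by exact_mod_cast hk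
    have h1 : x ^ 2 ≤ C / ρ k := (le_div_iff₀ (hρ k)).2 (by rw [mul_comm]; exact hx)
    have hρk := hρ k
    have h2 : C / ρ k ≤ C * ((k : ℝ) / ρ k) := by
      rw [mul_div_assoc']
      gcongr
      nlinarith
    have := Real.sqrt_le_sqrt (h1.trans h2)
    rw [Real.sqrt_mul hC ((k : ℝ) / ρ k)] at this
    calc x ≤ |x| := le_abs_self x
      _ = Real.sqrt (x ^ 2) := (Real.sqrt_sq_eq_abs x).symm
      _ ≤ Real.sqrt C * Real.sqrt ((k : ℝ) / ρ k) := this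
  have a_le : ∀ k : ℕ, 1 ≤ k →
      ‖t (k + 1) - toEuclideanLin L₁ (u k)‖ ≤ CA * Real.sqrt ((k : ℝ) / ρt k) :=
    fun k hk => sq_le_aux2 ρt hρtpos _ (by positivity) _ k hk (hA1 k)
  have b_le : ∀ k : ℕ, 1 ≤ k →
      ‖z (k + 1) - toEuclideanLin L₂ (u k)‖ ≤ CB * Real.sqrt ((k : ℝ) / ρz k) :=
    fun k hk => sq_le_aux2 ρz hρzpos _ (by positivity) _ k hk (hB1 k)
  -- summable shifted majorants
  have hshift : ∀ m : ℕ, Summable (fun k : ℕ => Real.sqrt (((k + m : ℕ) : ℝ) / ρt (k + m))) :=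
    fun m => (summable_nat_add_iff m).2 hsum_t
  have hshiftz : ∀ m : ℕ, Summable (fun k : ℕ => Real.sqrt (((k + m : ℕ) : ℝ) / ρz (k + m))) :=
    fun m => (summable_nat_add_iff m).2 hsum_z
  -- `t` is a Cauchy sequence
  have ht_cauchy : CauchySeq t := by
    apply cauchySeq_of_dist_le_of_summable (fun n => ‖t (n + 1) - t n‖)
    · intro n
      rw [dist_eq_norm, norm_sub_rev]
    · apply aux_summable_of_shift _
        (fun k : ℕ => CA * Real.sqrt (((k + 2 : ℕ) : ℝ) / ρt (k + 2))
          + CE * Real.sqrt (((k + 1 : ℕ) : ℝ) / ρt (k + 1))) 2 (fun n => norm_nonneg _)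
      · intro k
        have hsplit : t (k + 2 + 1) - t (k + 2)
            = (t (k + 2 + 1) - toEuclideanLin L₁ (u (k + 2)))
              + (toEuclideanLin L₁ (u (k + 2)) - t (k + 2)) := by abel
        calc ‖t (k + 2 + 1) - t (k + 2)‖
            ≤ ‖t (k + 2 + 1) - toEuclideanLin L₁ (u (k + 2))‖
              + ‖toEuclideanLin L₁ (u (k + 2)) - t (k + 2)‖ := by
              rw [hsplit]; exact norm_add_le _ _
          _ ≤ _ := add_le_add (a_le (k + 2) (by omega)) (e_le (k + 1) (by omega))
      · exact ((hshift 2).mul_left CA).add ((hshift 1).mul_left CE)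
  -- `z` is a Cauchy sequence
  have hz_cauchy : CauchySeq z := by
    apply cauchySeq_of_dist_le_of_summable (fun n => ‖z (n + 1) - z n‖)
    · intro n
      rw [dist_eq_norm, norm_sub_rev]
    · apply aux_summable_of_shift _
        (fun k : ℕ => CB * Real.sqrt (((k + 2 : ℕ) : ℝ) / ρz (k + 2))
          + CE * Real.sqrt (((k + 1 : ℕ) : ℝ) / ρz (k + 1))) 2 (fun n => norm_nonneg _)
      · intro k
        have hsplit : z (k + 2 + 1) - z (k + 2)
            = (z (k + 2 + 1) - toEuclideanLin L₂ (u (k + 2)))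
              + (toEuclideanLin L₂ (u (k + 2)) - z (k + 2)) := by abel
        calc ‖z (k + 2 + 1) - z (k + 2)‖
            ≤ ‖z (k + 2 + 1) - toEuclideanLin L₂ (u (k + 2))‖
              + ‖toEuclideanLin L₂ (u (k + 2)) - z (k + 2)‖ := by
              rw [hsplit]; exact norm_add_le _ _
          _ ≤ _ := add_le_add (b_le (k + 2) (by omega)) (f_le (k + 1) (by omega))
      · exact ((hshiftz 2).mul_left CB).add ((hshiftz 1).mul_left CE)
  -- `u` is a Cauchy sequence, via the antilipschitz bound for `L₁`
  obtain ⟨K, hK0, hKA⟩ := LinearMap.exists_antilipschitzWith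
    (toEuclideanLin L₁ : EuclideanSpace ℝ (Fin n) →ₗ[ℝ] EuclideanSpace ℝ (Fin l₁))
    (aux_ker_bot L₁ hL₁)
  have hu_cauchy : CauchySeq u := by
    apply cauchySeq_of_dist_le_of_summable (fun n => dist (u n) (u (n + 1)))
    · intro n; exact le_rfl
    · apply aux_summable_of_shift _
        (fun k : ℕ => (K : ℝ) * ((CA + CE) * Real.sqrt (((k + 1 : ℕ) : ℝ) / ρt (k + 1)))) 1
        (fun n => dist_nonneg)
      · intro k
        have h1 := hKA.le_mul_dist (u (k + 1)) (u (k + 1 + 1))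
        have h2 : dist (toEuclideanLin L₁ (u (k + 1))) (toEuclideanLin L₁ (u (k + 1 + 1)))
            ≤ (CA + CE) * Real.sqrt (((k + 1 : ℕ) : ℝ) / ρt (k + 1)) := by
          rw [dist_eq_norm]
          have htri : ‖toEuclideanLin L₁ (u (k + 1)) - toEuclideanLin L₁ (u (k + 1 + 1))‖
              ≤ ‖t (k + 1 + 1) - toEuclideanLin L₁ (u (k + 1))‖
                + ‖toEuclideanLin L₁ (u (k + 1 + 1)) - t (k + 1 + 1)‖ := by
            have : toEuclideanLin L₁ (u (k + 1)) - toEuclideanLin L₁ (u (k + 1 + 1))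
                = -((t (k + 1 + 1) - toEuclideanLin L₁ (u (k + 1)))
                  + (toEuclideanLin L₁ (u (k + 1 + 1)) - t (k + 1 + 1))) := by abel
            rw [this, norm_neg]
            exact norm_add_le _ _
          refine htri.trans ?_
          rw [add_mul]
          exact add_le_add (a_le (k + 1) (by omega)) (e_le (k + 1) (by omega))
        calc dist (u (k + 1)) (u (k + 1 + 1))
            ≤ (K : ℝ) * dist (toEuclideanLin L₁ (u (k + 1))) (toEuclideanLin L₁ (u (k + 1 + 1))) := h1
          _ ≤ (K : ℝ) * ((CA + CE) * Real.sqrt (((k + 1 : ℕ) : ℝ) / ρt (k + 1))) :=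
              mul_le_mul_of_nonneg_left h2 K.coe_nonneg
      · exact ((hshift 1).mul_left (CA + CE)).mul_left (K : ℝ)
  obtain ⟨tstar, htstar⟩ := cauchySeq_tendsto_of_complete ht_cauchy
  obtain ⟨zstar, hzstar⟩ := cauchySeq_tendsto_of_complete hz_cauchy
  obtain ⟨ustar, hustar⟩ := cauchySeq_tendsto_of_complete hu_cauchy
  -- the residuals tend to zero
  have hd0t : Tendsto (fun k : ℕ => CE * Real.sqrt ((k : ℝ) / ρt k)) atTop (𝓝 0) := by
    simpa using (hsum_t.tendsto_atTop_zero).const_mul CE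
  have hd0z : Tendsto (fun k : ℕ => CE * Real.sqrt ((k : ℝ) / ρz k)) atTop (𝓝 0) := by
    simpa using (hsum_z.tendsto_atTop_zero).const_mul CE
  have he0 : Tendsto (fun k : ℕ => ‖toEuclideanLin L₁ (u (k + 1)) - t (k + 1)‖) atTop (𝓝 0) := by
    have := squeeze_zero' (f := fun k : ℕ => ‖toEuclideanLin L₁ (u (k + 1)) - t (k + 1)‖)
      (Eventually.of_forall fun k => norm_nonneg _)
      (eventually_atTop.2 ⟨1, fun k hk => e_le k hk⟩) hd0t
    exact this
  have hf0 : Tendsto (fun k : ℕ => ‖toEuclideanLin L₂ (u (k + 1)) - z (k + 1)‖) atTop (𝓝 0) := by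
    exact squeeze_zero' (Eventually.of_forall fun k => norm_nonneg _)
      (eventually_atTop.2 ⟨1, fun k hk => f_le k hk⟩) hd0z
  refine ⟨tstar, zstar, ustar, htstar, hzstar, hustar, ?_, ?_⟩
  · have h1 : Tendsto (fun k : ℕ => toEuclideanLin L₁ (u (k + 1)) - t (k + 1)) atTop (𝓝 0) :=
      tendsto_zero_iff_norm_tendsto_zero.2 he0
    have h2 : Tendsto (fun k : ℕ => t (k + 1)) atTop (𝓝 tstar) :=
      htstar.comp (tendsto_add_atTop_nat 1)
    have h3 := h1.add h2
    rw [zero_add] at h3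
    have h4 : Tendsto (fun k : ℕ => toEuclideanLin L₁ (u (k + 1))) atTop (𝓝 tstar) := by
      simpa using h3
    exact (tendsto_add_atTop_iff_nat 1).1 h4
  · have h1 : Tendsto (fun k : ℕ => toEuclideanLin L₂ (u (k + 1)) - z (k + 1)) atTop (𝓝 0) :=
      tendsto_zero_iff_norm_tendsto_zero.2 hf0
    have h2 : Tendsto (fun k : ℕ => z (k + 1)) atTop (𝓝 zstar) :=
      hzstar.comp (tendsto_add_atTop_nat 1)
    have h3 := h1.add h2
    rw [zero_add] at h3
    have h4 : Tendsto (fun k : ℕ => toEuclideanLin L₂ (u (k + 1))) atTop (𝓝 zstar) := by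
      simpa using h3
    exact (tendsto_add_atTop_iff_nat 1).1 h4
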